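/- Let G be a connected finite simple graph with at least five vertices. Then G does not contain the banner as a topological minor if and only if G is a cycle or G does not contain the cycle C_4 as a topological minor. -/

import Mathlib

open SimpleGraph

/-- The internal vertices of a walk: its support minus the two endpoints. -/
def SimpleGraph.Walk.internalSupport {V : Type*} {G : SimpleGraph V} {u v : V}
    (p : G.Walk u v) : List V :=
  p.support.tail.dropLast

/-- `G` contains `H` as a topological minor: there is an injective map `φ` on vertices and,
for each edge `{x,y}` of `H`, a path in `G` from `φ x` to `φ y` (one path per edge, encoded
symmetrically on ordered adjacent pairs), such that for any two distinct edges of `H` no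
internal vertex of the path of one edge lies on the path of the other edge. -/
def SimpleGraph.IsTopMinor {V W : Type*} (H : SimpleGraph V) (G : SimpleGraph W) : Prop :=
  ∃ (φ : V → W) (σ : ∀ ⦃x y : V⦄, H.Adj x y → G.Walk (φ x) (φ y)),
    Function.Injective φ ∧
    (∀ ⦃x y⦄ (h : H.Adj x y), (σ h).IsPath) ∧
    (∀ ⦃x y⦄ (h : H.Adj x y), σ h.symm = (σ h).reverse) ∧
    (∀ ⦃x y x' y'⦄ (h : H.Adj x y) (h' : H.Adj x' y'),
      s(x, y) ≠ s(x', y') →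
      ∀ w ∈ (σ h).internalSupport, w ∉ (σ h').support)

/-- The banner: a cycle `0 - 1 - 2 - 3 - 0` together with a pendant vertex `4`
adjacent to `0`. -/
def bannerGraph : SimpleGraph (Fin 5) :=
  SimpleGraph.fromRel (fun i j =>
    (i = 0 ∧ j = 1) ∨ (i = 1 ∧ j = 2) ∨ (i = 2 ∧ j = 3) ∨ (i = 3 ∧ j = 0) ∨ (i = 0 ∧ j = 4))

/-- A graph is a cycle if it is connected and `2`-regular. -/
def SimpleGraph.IsCycleGraph {V : Type*} (G : SimpleGraph V) : Prop :=
  G.Connected ∧ ∀ v, Nat.card (G.neighborSet v) = 2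

namespace SimpleGraph.Walk

variable {V : Type*} {G : SimpleGraph V} {u v : V}

lemma list_tail_dropLast {α : Type*} : ∀ (l : List α), l.tail.dropLast = l.dropLast.tail
  | [] => rfl
  | [_] => rfl
  | _ :: _ :: _ => rfl

lemma internalSupport_subset_support (p : G.Walk u v) :
    ∀ x ∈ p.internalSupport, x ∈ p.support :=
  fun _ hx => List.mem_of_mem_tail (List.dropLast_subset _ hx)

lemma internalSupport_subset_support_tail (p : G.Walk u v) :
    ∀ x ∈ p.internalSupport, x ∈ p.support.tail :=
  fun _ hx => List.dropLast_subset _ hx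

lemma support_tail_eq (p : G.Walk u v) (hp : ¬ p.Nil) :
    p.support.tail = p.internalSupport ++ [v] := by
  have hlen : p.support.tail.length = p.length := by
    simp [length_support]
  have hne : p.support.tail ≠ [] := by
    intro h
    rw [h] at hlen
    exact (not_nil_iff_lt_length.mp hp).ne (by simpa using hlen)
  have hlast : p.support.tail.getLast hne = v := by
    rw [List.getLast_tail]
    exact p.getLast_support
  conv_lhs => rw [← List.dropLast_append_getLast hne]
  rw [hlast]
  rfl

lemma mem_support_cases (p : G.Walk u v) {x : V} (hx : x ∈ p.support) :
    x = u ∨ x = v ∨ x ∈ p.internalSupport := by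
  by_cases hnil : p.Nil
  · rw [nil_iff_support_eq.mp hnil] at hx
    simp at hx
    exact Or.inl hx
  · rw [support_eq_cons, support_tail_eq p hnil] at hx
    simp at hx
    tauto

lemma start_not_mem_internalSupport (p : G.Walk u v) (hp : p.IsPath) :
    u ∉ p.internalSupport := by
  intro h
  have hnd := (isPath_def _).mp hp
  rw [support_eq_cons] at hnd
  exact (List.nodup_cons.mp hnd).1 (p.internalSupport_subset_support_tail _ h)

lemma end_not_mem_internalSupport (p : G.Walk u v) (hp : p.IsPath) :
    v ∉ p.internalSupport := by
  by_cases hnil : p.Nil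
  · intro h
    have := p.internalSupport_subset_support _ h
    rw [nil_iff_support_eq.mp hnil] at this
    simp at this
    subst this
    have : p.internalSupport = [] := by
      unfold internalSupport
      rw [nil_iff_support_eq.mp hnil]
      rfl
    simp [this] at h
  · intro h
    have hnd := (isPath_def _).mp hp
    rw [support_eq_cons] at hnd
    have hnd2 := (List.nodup_cons.mp hnd).2
    rw [support_tail_eq p hnil] at hnd2
    have := List.disjoint_of_nodup_append hnd2
    exact this h (by simp)

lemma mem_internalSupport_iff {p : G.Walk u v} (hp : p.IsPath) {x : V} :
    x ∈ p.internalSupport ↔ x ∈ p.support ∧ x ≠ u ∧ x ≠ v := by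
  constructor
  · intro h
    refine ⟨p.internalSupport_subset_support _ h, ?_, ?_⟩
    · rintro rfl; exact p.start_not_mem_internalSupport hp h
    · rintro rfl; exact p.end_not_mem_internalSupport hp h
  · rintro ⟨hmem, hu, hv⟩
    rcases p.mem_support_cases hmem with rfl | rfl | h
    · exact absurd rfl hu
    · exact absurd rfl hv
    · exact h

@[simp] lemma internalSupport_reverse (p : G.Walk u v) :
    p.reverse.internalSupport = p.internalSupport.reverse := by
  unfold internalSupport
  rw [support_reverse, list_tail_dropLast, List.dropLast_reverse, List.tail_reverse,
    list_tail_dropLast]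

end SimpleGraph.Walk

namespace SimpleGraph.Walk
variable {V : Type*} {G : SimpleGraph V} {u v : V}

lemma getVert_eq_support_getElem?' (p : G.Walk u v) {i : ℕ} (hi : i ≤ p.length) :
    p.support[i]? = some (p.getVert i) := by
  induction p generalizing i with
  | nil =>
    simp only [length_nil, Nat.le_zero] at hi
    subst hi
    simp
  | cons h q ih =>
    cases i with
    | zero => simp
    | succ n =>
      rw [support_cons, List.getElem?_cons_succ, getVert_cons_succ]
      exact ih (by simpa [Nat.succ_le_succ_iff] using hi)

lemma support_tail_getElem? (p : G.Walk u v) (j : ℕ) :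
    p.support.tail[j]? = p.support[j+1]? := by
  conv_rhs => rw [p.support_eq_cons]
  simp

lemma getVert_mem_support_tail (p : G.Walk u v) {i : ℕ} (h1 : 1 ≤ i) (h2 : i ≤ p.length) :
    p.getVert i ∈ p.support.tail := by
  obtain ⟨j, rfl⟩ : ∃ j, i = j + 1 := ⟨i - 1, by omega⟩
  have h := p.support_tail_getElem? j
  rw [p.getVert_eq_support_getElem?' h2] at h
  exact List.mem_of_getElem? h

lemma getVert_tail_inj (p : G.Walk u v) (hnd : p.support.tail.Nodup) {i j : ℕ}
    (hi : 1 ≤ i) (hi' : i ≤ p.length) (hj : 1 ≤ j) (hj' : j ≤ p.length)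
    (heq : p.getVert i = p.getVert j) : i = j := by
  obtain ⟨i', rfl⟩ : ∃ k, i = k + 1 := ⟨i - 1, by omega⟩
  obtain ⟨j', rfl⟩ : ∃ k, j = k + 1 := ⟨j - 1, by omega⟩
  have e1 := p.support_tail_getElem? i'
  have e2 := p.support_tail_getElem? j'
  rw [p.getVert_eq_support_getElem?' hi'] at e1
  rw [p.getVert_eq_support_getElem?' hj'] at e2
  have hlen : p.support.tail.length = p.length := by
    rw [List.length_tail, p.length_support]; omega
  have : i' = j' := by
    apply (List.getElem?_inj (show i' < p.support.tail.length by omega) hnd).mp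
    rw [e1, e2, heq]
  omega

lemma cycle_getVert_eq_start {c : G.Walk v v} (hnd : c.support.tail.Nodup) {i : ℕ}
    (hi : i ≤ c.length) (h : c.getVert i = v) : i = 0 ∨ i = c.length := by
  rcases Nat.eq_zero_or_pos i with h0 | h1
  · exact Or.inl h0
  · right
    exact c.getVert_tail_inj hnd h1 hi (by omega) le_rfl (by rw [h, getVert_length])

lemma exists_getVert_of_mem_edges (p : G.Walk u v) {e : Sym2 V} (he : e ∈ p.edges) :
    ∃ i < p.length, s(p.getVert i, p.getVert (i + 1)) = e := by
  induction p with
  | nil => simp at he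
  | cons h q ih =>
    rw [edges_cons] at he
    rcases List.mem_cons.mp he with rfl | he'
    · exact ⟨0, by simp, by simp [getVert_cons_succ]⟩
    · obtain ⟨i, hi, hs⟩ := ih he'
      exact ⟨i + 1, by simp [Nat.succ_lt_succ_iff, hi], by simpa [getVert_cons_succ] using hs⟩

lemma mem_support_iff_mem_tail (p : G.Walk v v) (hp : ¬p.Nil) {x : V} :
    x ∈ p.support ↔ x ∈ p.support.tail := by
  constructor
  · intro hx
    rw [support_eq_cons] at hx
    rcases List.mem_cons.mp hx with rfl | hx'
    · rw [support_tail_eq p hp]; simp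
    · exact hx'
  · exact fun hx => List.mem_of_mem_tail hx

lemma mem_support_rotate [DecidableEq V] {c : G.Walk v v} (h : u ∈ c.support) (hc : ¬c.Nil)
    {x : V} : x ∈ (c.rotate u h).support ↔ x ∈ c.support := by
  have hrotn : ¬(c.rotate u h).Nil := by
    rw [nil_iff_length_eq, length_rotate]
    exact fun hl => (not_nil_iff_lt_length.mp hc).ne' hl
  rw [mem_support_iff_mem_tail _ hrotn, mem_support_iff_mem_tail _ hc]
  exact (support_rotate c u h).mem_iff

end SimpleGraph.Walk

namespace SimpleGraph.Walk
variable {V : Type*} {G : SimpleGraph V}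

lemma tail_disjoint_tail {a b c d : V} {p : G.Walk a b} {q : G.Walk c d}
    (hpn : ¬p.Nil) (hqn : ¬q.Nil)
    (h1 : ∀ x ∈ p.internalSupport, x ∉ q.support)
    (h2 : ∀ x ∈ q.internalSupport, x ∉ p.support)
    (hbd : b ≠ d) : p.support.tail.Disjoint q.support.tail := by
  rw [support_tail_eq p hpn, support_tail_eq q hqn]
  intro x hx hx'
  rcases List.mem_append.mp hx with hxi | hxb
  · rcases List.mem_append.mp hx' with hxj | hxd
    · exact h1 x hxi (q.internalSupport_subset_support x hxj)
    · simp only [List.mem_singleton] at hxd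
      subst hxd
      exact h1 x hxi q.end_mem_support
  · simp only [List.mem_singleton] at hxb
    subst hxb
    rcases List.mem_append.mp hx' with hxj | hxd
    · exact h2 _ hxj p.end_mem_support
    · simp only [List.mem_singleton] at hxd
      exact hbd hxd

lemma mem_endpoints_of_mem_both {a b c d : V} {p : G.Walk a b} {q : G.Walk c d}
    (h1 : ∀ x ∈ p.internalSupport, x ∉ q.support)
    (h2 : ∀ x ∈ q.internalSupport, x ∉ p.support)
    {x : V} (hx : x ∈ p.support) (hx' : x ∈ q.support) :
    (x = a ∨ x = b) ∧ (x = c ∨ x = d) := by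
  constructor
  · rcases p.mem_support_cases hx with rfl | rfl | hi
    · exact Or.inl rfl
    · exact Or.inr rfl
    · exact absurd hx' (h1 x hi)
  · rcases q.mem_support_cases hx' with rfl | rfl | hi
    · exact Or.inl rfl
    · exact Or.inr rfl
    · exact absurd hx (h2 x hi)

lemma edges_disjoint_of {a b c d : V} {p : G.Walk a b} {q : G.Walk c d}
    (hshare : ∀ x y : V, x ≠ y → x ∈ p.support → x ∈ q.support →
      y ∈ p.support → y ∈ q.support → False) :
    p.edges.Disjoint q.edges := by
  intro e he he'
  induction e using Sym2.ind with
  | _ x y =>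
    exact hshare x y (p.adj_of_mem_edges he).ne
      (p.fst_mem_support_of_mem_edges he) (q.fst_mem_support_of_mem_edges he')
      (p.snd_mem_support_of_mem_edges he) (q.snd_mem_support_of_mem_edges he')

end SimpleGraph.Walk

lemma eq_of_mem_pair' {V : Type*} {x a b c : V} (h1 : x = a ∨ x = b) (h2 : x = b ∨ x = c)
    (hab : a ≠ b) (hac : a ≠ c) : x = b := by
  rcases h1 with rfl | rfl
  · rcases h2 with h | h
    · exact h
    · exact absurd h hac
  · rfl

lemma false_of_mem_pairs {V : Type*} {x a b c d : V} (h1 : x = a ∨ x = b) (h2 : x = c ∨ x = d)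
    (hac : a ≠ c) (had : a ≠ d) (hbc : b ≠ c) (hbd : b ≠ d) : False := by
  rcases h1 with rfl | rfl <;> rcases h2 with h | h
  · exact hac h
  · exact had h
  · exact hbc h
  · exact hbd h

open SimpleGraph.Walk in
lemma exists_cycle_of_c4_topMinor {V : Type*} {G : SimpleGraph V}
    (h : (SimpleGraph.cycleGraph 4).IsTopMinor G) :
    ∃ (u : V) (c : G.Walk u u), c.IsCycle ∧ 4 ≤ c.length := by
  obtain ⟨φ, σ, hinj, hpath, hsymm, hdisj⟩ := h
  have h01 : (cycleGraph 4).Adj 0 1 := by decide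
  have h12 : (cycleGraph 4).Adj 1 2 := by decide
  have h23 : (cycleGraph 4).Adj 2 3 := by decide
  have h30 : (cycleGraph 4).Adj 3 0 := by decide
  set p1 := σ h01 with hp1
  set p2 := σ h12 with hp2
  set p3 := σ h23 with hp3
  set p4 := σ h30 with hp4
  have n01 : φ 0 ≠ φ 1 := fun h => (by decide : (0 : Fin 4) ≠ 1) (hinj h)
  have n02 : φ 0 ≠ φ 2 := fun h => (by decide : (0 : Fin 4) ≠ 2) (hinj h)
  have n03 : φ 0 ≠ φ 3 := fun h => (by decide : (0 : Fin 4) ≠ 3) (hinj h)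
  have n12 : φ 1 ≠ φ 2 := fun h => (by decide : (1 : Fin 4) ≠ 2) (hinj h)
  have n13 : φ 1 ≠ φ 3 := fun h => (by decide : (1 : Fin 4) ≠ 3) (hinj h)
  have n23 : φ 2 ≠ φ 3 := fun h => (by decide : (2 : Fin 4) ≠ 3) (hinj h)
  have hn1 : ¬p1.Nil := not_nil_of_ne n01
  have hn2 : ¬p2.Nil := not_nil_of_ne n12
  have hn3 : ¬p3.Nil := not_nil_of_ne n23
  have hn4 : ¬p4.Nil := not_nil_of_ne (Ne.symm n03)
  have D12 : ∀ x ∈ p1.internalSupport, x ∉ p2.support := hdisj h01 h12 (by decide)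
  have D13 : ∀ x ∈ p1.internalSupport, x ∉ p3.support := hdisj h01 h23 (by decide)
  have D14 : ∀ x ∈ p1.internalSupport, x ∉ p4.support := hdisj h01 h30 (by decide)
  have D21 : ∀ x ∈ p2.internalSupport, x ∉ p1.support := hdisj h12 h01 (by decide)
  have D23 : ∀ x ∈ p2.internalSupport, x ∉ p3.support := hdisj h12 h23 (by decide)
  have D24 : ∀ x ∈ p2.internalSupport, x ∉ p4.support := hdisj h12 h30 (by decide)
  have D31 : ∀ x ∈ p3.internalSupport, x ∉ p1.support := hdisj h23 h01 (by decide)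
  have D32 : ∀ x ∈ p3.internalSupport, x ∉ p2.support := hdisj h23 h12 (by decide)
  have D34 : ∀ x ∈ p3.internalSupport, x ∉ p4.support := hdisj h23 h30 (by decide)
  have D41 : ∀ x ∈ p4.internalSupport, x ∉ p1.support := hdisj h30 h01 (by decide)
  have D42 : ∀ x ∈ p4.internalSupport, x ∉ p2.support := hdisj h30 h12 (by decide)
  have D43 : ∀ x ∈ p4.internalSupport, x ∉ p3.support := hdisj h30 h23 (by decide)
  refine ⟨φ 0, p1.append (p2.append (p3.append p4)), ?_, ?_⟩
  · rw [SimpleGraph.Walk.isCycle_def]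
    refine ⟨?_, ?_, ?_⟩
    · -- trail
      rw [SimpleGraph.Walk.isTrail_def]
      rw [edges_append, edges_append, edges_append]
      have t1 := (hpath h01).isTrail.edges_nodup
      have t2 := (hpath h12).isTrail.edges_nodup
      have t3 := (hpath h23).isTrail.edges_nodup
      have t4 := (hpath h30).isTrail.edges_nodup
      have E12 : p1.edges.Disjoint p2.edges := by
        apply edges_disjoint_of
        intro x y hxy hx1 hx2 hy1 hy2
        obtain ⟨hxa, hxb⟩ := mem_endpoints_of_mem_both D12 D21 hx1 hx2
        obtain ⟨hya, hyb⟩ := mem_endpoints_of_mem_both D12 D21 hy1 hy2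
        exact hxy ((eq_of_mem_pair' hxa hxb n01 n02).trans
          (eq_of_mem_pair' hya hyb n01 n02).symm)
      have E13 : p1.edges.Disjoint p3.edges := by
        apply edges_disjoint_of
        intro x y hxy hx1 hx2 hy1 hy2
        obtain ⟨hxa, hxb⟩ := mem_endpoints_of_mem_both D13 D31 hx1 hx2
        exact false_of_mem_pairs hxa hxb n02 n03 n12 n13
      have E14 : p1.edges.Disjoint p4.edges := by
        apply edges_disjoint_of
        intro x y hxy hx1 hx2 hy1 hy2
        obtain ⟨hxa, hxb⟩ := mem_endpoints_of_mem_both D14 D41 hx1 hx2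
        obtain ⟨hya, hyb⟩ := mem_endpoints_of_mem_both D14 D41 hy1 hy2
        have hx0 : x = φ 0 := by
          rcases hxa with rfl | rfl
          · rfl
          · rcases hxb with h | h
            · exact absurd h.symm n13.symm
            · exact absurd h n01.symm
        have hy0 : y = φ 0 := by
          rcases hya with rfl | rfl
          · rfl
          · rcases hyb with h | h
            · exact absurd h.symm n13.symm
            · exact absurd h n01.symm
        exact hxy (hx0.trans hy0.symm)
      have E23 : p2.edges.Disjoint p3.edges := by
        apply edges_disjoint_of
        intro x y hxy hx1 hx2 hy1 hy2
        obtain ⟨hxa, hxb⟩ := mem_endpoints_of_mem_both D23 D32 hx1 hx2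
        obtain ⟨hya, hyb⟩ := mem_endpoints_of_mem_both D23 D32 hy1 hy2
        exact hxy ((eq_of_mem_pair' hxa hxb n12 n13).trans
          (eq_of_mem_pair' hya hyb n12 n13).symm)
      have E24 : p2.edges.Disjoint p4.edges := by
        apply edges_disjoint_of
        intro x y hxy hx1 hx2 hy1 hy2
        obtain ⟨hxa, hxb⟩ := mem_endpoints_of_mem_both D24 D42 hx1 hx2
        exact false_of_mem_pairs hxa hxb n13 n01.symm n23 n02.symm
      have E34 : p3.edges.Disjoint p4.edges := by
        apply edges_disjoint_of
        intro x y hxy hx1 hx2 hy1 hy2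
        obtain ⟨hxa, hxb⟩ := mem_endpoints_of_mem_both D34 D43 hx1 hx2
        obtain ⟨hya, hyb⟩ := mem_endpoints_of_mem_both D34 D43 hy1 hy2
        exact hxy ((eq_of_mem_pair' hxa hxb n23 (Ne.symm n02)).trans
          (eq_of_mem_pair' hya hyb n23 (Ne.symm n02)).symm)
      refine List.Nodup.append t1 (List.Nodup.append t2 (List.Nodup.append t3 t4 E34)
        ((List.disjoint_append_right).mpr ⟨E23, E24⟩))
        ((List.disjoint_append_right).mpr ⟨E12,
          (List.disjoint_append_right).mpr ⟨E13, E14⟩⟩)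
    · -- not nil
      intro hnil
      have := congrArg SimpleGraph.Walk.length hnil
      rw [length_append] at this
      simp only [SimpleGraph.Walk.length_nil] at this
      have l1 : 0 < p1.length := not_nil_iff_lt_length.mp hn1
      omega
    · -- support tail nodup
      rw [tail_support_append, tail_support_append, tail_support_append]
      have s1 := ((hpath h01).support_nodup).tail
      have s2 := ((hpath h12).support_nodup).tail
      have s3 := ((hpath h23).support_nodup).tail
      have s4 := ((hpath h30).support_nodup).tail
      have T12 := tail_disjoint_tail hn1 hn2 D12 D21 n12
      have T13 := tail_disjoint_tail hn1 hn3 D13 D31 n13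
      have T14 := tail_disjoint_tail hn1 hn4 D14 D41 (Ne.symm n01)
      have T23 := tail_disjoint_tail hn2 hn3 D23 D32 n23
      have T24 := tail_disjoint_tail hn2 hn4 D24 D42 (Ne.symm n02)
      have T34 := tail_disjoint_tail hn3 hn4 D34 D43 (Ne.symm n03)
      refine List.Nodup.append s1 (List.Nodup.append s2 (List.Nodup.append s3 s4 T34)
        ((List.disjoint_append_right).mpr ⟨T23, T24⟩))
        ((List.disjoint_append_right).mpr ⟨T12,
          (List.disjoint_append_right).mpr ⟨T13, T14⟩⟩)
  · rw [length_append, length_append, length_append]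
    have l1 : 0 < p1.length := not_nil_iff_lt_length.mp hn1
    have l2 : 0 < p2.length := not_nil_iff_lt_length.mp hn2
    have l3 : 0 < p3.length := not_nil_iff_lt_length.mp hn3
    have l4 : 0 < p4.length := not_nil_iff_lt_length.mp hn4
    omega

instance : DecidableRel bannerGraph.Adj := fun a b =>
  decidable_of_iff' _ (SimpleGraph.fromRel_adj _ a b)

lemma banner_adj_cases : ∀ {x y : Fin 5}, bannerGraph.Adj x y →
    (x = 0 ∧ y = 1) ∨ (x = 1 ∧ y = 0) ∨ (x = 1 ∧ y = 2) ∨ (x = 2 ∧ y = 1) ∨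
    (x = 2 ∧ y = 3) ∨ (x = 3 ∧ y = 2) ∨ (x = 3 ∧ y = 0) ∨ (x = 0 ∧ y = 3) ∨
    (x = 0 ∧ y = 4) ∨ (x = 4 ∧ y = 0) := by decide

def bannerWalks {V : Type*} {G : SimpleGraph V} {a0 a1 a2 a3 a4 : V}
    (p01 : G.Walk a0 a1) (p12 : G.Walk a1 a2) (p23 : G.Walk a2 a3) (p30 : G.Walk a3 a0)
    (p04 : G.Walk a0 a4) :
    ∀ ⦃x y : Fin 5⦄, bannerGraph.Adj x y → G.Walk (![a0, a1, a2, a3, a4] x) (![a0, a1, a2, a3, a4] y) :=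
  fun x y h =>
    match x, y, h with
    | ⟨0, _⟩, ⟨1, _⟩, _ => p01
    | ⟨1, _⟩, ⟨0, _⟩, _ => p01.reverse
    | ⟨1, _⟩, ⟨2, _⟩, _ => p12
    | ⟨2, _⟩, ⟨1, _⟩, _ => p12.reverse
    | ⟨2, _⟩, ⟨3, _⟩, _ => p23
    | ⟨3, _⟩, ⟨2, _⟩, _ => p23.reverse
    | ⟨3, _⟩, ⟨0, _⟩, _ => p30
    | ⟨0, _⟩, ⟨3, _⟩, _ => p30.reverse
    | ⟨0, _⟩, ⟨4, _⟩, _ => p04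
    | ⟨4, _⟩, ⟨0, _⟩, _ => p04.reverse
    | ⟨0, _⟩, ⟨0, _⟩, h => absurd h (of_decide_eq_false rfl)
    | ⟨0, _⟩, ⟨2, _⟩, h => absurd h (of_decide_eq_false rfl)
    | ⟨1, _⟩, ⟨1, _⟩, h => absurd h (of_decide_eq_false rfl)
    | ⟨1, _⟩, ⟨3, _⟩, h => absurd h (of_decide_eq_false rfl)
    | ⟨1, _⟩, ⟨4, _⟩, h => absurd h (of_decide_eq_false rfl)
    | ⟨2, _⟩, ⟨0, _⟩, h => absurd h (of_decide_eq_false rfl)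
    | ⟨2, _⟩, ⟨2, _⟩, h => absurd h (of_decide_eq_false rfl)
    | ⟨2, _⟩, ⟨4, _⟩, h => absurd h (of_decide_eq_false rfl)
    | ⟨3, _⟩, ⟨1, _⟩, h => absurd h (of_decide_eq_false rfl)
    | ⟨3, _⟩, ⟨3, _⟩, h => absurd h (of_decide_eq_false rfl)
    | ⟨3, _⟩, ⟨4, _⟩, h => absurd h (of_decide_eq_false rfl)
    | ⟨4, _⟩, ⟨1, _⟩, h => absurd h (of_decide_eq_false rfl)
    | ⟨4, _⟩, ⟨2, _⟩, h => absurd h (of_decide_eq_false rfl)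
    | ⟨4, _⟩, ⟨3, _⟩, h => absurd h (of_decide_eq_false rfl)
    | ⟨4, _⟩, ⟨4, _⟩, h => absurd h (of_decide_eq_false rfl)

section bannerWalksLemmas
variable {V : Type*} {G : SimpleGraph V} {a0 a1 a2 a3 a4 : V}
    (p01 : G.Walk a0 a1) (p12 : G.Walk a1 a2) (p23 : G.Walk a2 a3) (p30 : G.Walk a3 a0)
    (p04 : G.Walk a0 a4)

@[simp] lemma bannerWalks_01 (h : bannerGraph.Adj 0 1) :
    bannerWalks p01 p12 p23 p30 p04 h = p01 := rfl
@[simp] lemma bannerWalks_10 (h : bannerGraph.Adj 1 0) :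
    bannerWalks p01 p12 p23 p30 p04 h = p01.reverse := rfl
@[simp] lemma bannerWalks_12 (h : bannerGraph.Adj 1 2) :
    bannerWalks p01 p12 p23 p30 p04 h = p12 := rfl
@[simp] lemma bannerWalks_21 (h : bannerGraph.Adj 2 1) :
    bannerWalks p01 p12 p23 p30 p04 h = p12.reverse := rfl
@[simp] lemma bannerWalks_23 (h : bannerGraph.Adj 2 3) :
    bannerWalks p01 p12 p23 p30 p04 h = p23 := rfl
@[simp] lemma bannerWalks_32 (h : bannerGraph.Adj 3 2) :
    bannerWalks p01 p12 p23 p30 p04 h = p23.reverse := rfl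
@[simp] lemma bannerWalks_30 (h : bannerGraph.Adj 3 0) :
    bannerWalks p01 p12 p23 p30 p04 h = p30 := rfl
@[simp] lemma bannerWalks_03 (h : bannerGraph.Adj 0 3) :
    bannerWalks p01 p12 p23 p30 p04 h = p30.reverse := rfl
@[simp] lemma bannerWalks_04 (h : bannerGraph.Adj 0 4) :
    bannerWalks p01 p12 p23 p30 p04 h = p04 := rfl
@[simp] lemma bannerWalks_40 (h : bannerGraph.Adj 4 0) :
    bannerWalks p01 p12 p23 p30 p04 h = p04.reverse := rfl

end bannerWalksLemmas

open SimpleGraph.Walk in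
lemma banner_model {V : Type*} {G : SimpleGraph V} {a0 a1 a2 a3 a4 : V}
    (p01 : G.Walk a0 a1) (p12 : G.Walk a1 a2) (p23 : G.Walk a2 a3) (p30 : G.Walk a3 a0)
    (p04 : G.Walk a0 a4)
    (hp01 : p01.IsPath) (hp12 : p12.IsPath) (hp23 : p23.IsPath) (hp30 : p30.IsPath)
    (hp04 : p04.IsPath)
    (hinj : Function.Injective ![a0, a1, a2, a3, a4])
    (H1 : ∀ z ∈ p01.internalSupport, z ∉ p12.support)
    (H2 : ∀ z ∈ p01.internalSupport, z ∉ p23.support)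
    (H3 : ∀ z ∈ p01.internalSupport, z ∉ p30.support)
    (H4 : ∀ z ∈ p01.internalSupport, z ∉ p04.support)
    (H5 : ∀ z ∈ p12.internalSupport, z ∉ p01.support)
    (H6 : ∀ z ∈ p12.internalSupport, z ∉ p23.support)
    (H7 : ∀ z ∈ p12.internalSupport, z ∉ p30.support)
    (H8 : ∀ z ∈ p12.internalSupport, z ∉ p04.support)
    (H9 : ∀ z ∈ p23.internalSupport, z ∉ p01.support)
    (H10 : ∀ z ∈ p23.internalSupport, z ∉ p12.support)
    (H11 : ∀ z ∈ p23.internalSupport, z ∉ p30.support)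
    (H12 : ∀ z ∈ p23.internalSupport, z ∉ p04.support)
    (H13 : ∀ z ∈ p30.internalSupport, z ∉ p01.support)
    (H14 : ∀ z ∈ p30.internalSupport, z ∉ p12.support)
    (H15 : ∀ z ∈ p30.internalSupport, z ∉ p23.support)
    (H16 : ∀ z ∈ p30.internalSupport, z ∉ p04.support)
    (H17 : ∀ z ∈ p04.internalSupport, z ∉ p01.support)
    (H18 : ∀ z ∈ p04.internalSupport, z ∉ p12.support)
    (H19 : ∀ z ∈ p04.internalSupport, z ∉ p23.support)
    (H20 : ∀ z ∈ p04.internalSupport, z ∉ p30.support) :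
    bannerGraph.IsTopMinor G := by
  refine ⟨![a0, a1, a2, a3, a4], bannerWalks p01 p12 p23 p30 p04, hinj, ?_, ?_, ?_⟩
  · intro x y h
    rcases banner_adj_cases h with ⟨rfl, rfl⟩ | ⟨rfl, rfl⟩ | ⟨rfl, rfl⟩ | ⟨rfl, rfl⟩ |
      ⟨rfl, rfl⟩ | ⟨rfl, rfl⟩ | ⟨rfl, rfl⟩ | ⟨rfl, rfl⟩ | ⟨rfl, rfl⟩ | ⟨rfl, rfl⟩ <;>
      simp only [bannerWalks_01, bannerWalks_10, bannerWalks_12, bannerWalks_21,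
        bannerWalks_23, bannerWalks_32, bannerWalks_30, bannerWalks_03,
        bannerWalks_04, bannerWalks_40] <;>
      first
        | assumption
        | exact SimpleGraph.Walk.IsPath.reverse (by assumption)
  · intro x y h
    rcases banner_adj_cases h with ⟨rfl, rfl⟩ | ⟨rfl, rfl⟩ | ⟨rfl, rfl⟩ | ⟨rfl, rfl⟩ |
      ⟨rfl, rfl⟩ | ⟨rfl, rfl⟩ | ⟨rfl, rfl⟩ | ⟨rfl, rfl⟩ | ⟨rfl, rfl⟩ | ⟨rfl, rfl⟩ <;>
      simp only [bannerWalks_01, bannerWalks_10, bannerWalks_12, bannerWalks_21,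
        bannerWalks_23, bannerWalks_32, bannerWalks_30, bannerWalks_03,
        bannerWalks_04, bannerWalks_40, SimpleGraph.Walk.reverse_reverse, Matrix.cons_val]
  · intro x y x' y' h h' hne
    rcases banner_adj_cases h with ⟨rfl, rfl⟩ | ⟨rfl, rfl⟩ | ⟨rfl, rfl⟩ | ⟨rfl, rfl⟩ |
      ⟨rfl, rfl⟩ | ⟨rfl, rfl⟩ | ⟨rfl, rfl⟩ | ⟨rfl, rfl⟩ | ⟨rfl, rfl⟩ | ⟨rfl, rfl⟩ <;>
    rcases banner_adj_cases h' with ⟨rfl, rfl⟩ | ⟨rfl, rfl⟩ | ⟨rfl, rfl⟩ | ⟨rfl, rfl⟩ |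
      ⟨rfl, rfl⟩ | ⟨rfl, rfl⟩ | ⟨rfl, rfl⟩ | ⟨rfl, rfl⟩ | ⟨rfl, rfl⟩ | ⟨rfl, rfl⟩ <;>
    first
      | exact absurd (by decide) hne
      | (simp only [bannerWalks_01, bannerWalks_10, bannerWalks_12, bannerWalks_21,
          bannerWalks_23, bannerWalks_32, bannerWalks_30, bannerWalks_03,
          bannerWalks_04, bannerWalks_40, SimpleGraph.Walk.internalSupport_reverse,
          SimpleGraph.Walk.support_reverse, List.mem_reverse, Matrix.cons_val]
         intro z hz
         first
           | exact H1 z hz | exact H2 z hz | exact H3 z hz | exact H4 z hz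
           | exact H5 z hz | exact H6 z hz | exact H7 z hz | exact H8 z hz
           | exact H9 z hz | exact H10 z hz | exact H11 z hz | exact H12 z hz
           | exact H13 z hz | exact H14 z hz | exact H15 z hz | exact H16 z hz
           | exact H17 z hz | exact H18 z hz | exact H19 z hz | exact H20 z hz)

open SimpleGraph.Walk in
lemma isPath_singleton {V : Type*} {G : SimpleGraph V} {u v : V} (h : G.Adj u v) :
    (Walk.cons h .nil).IsPath := by
  simp [Walk.isPath_def, h.ne]

lemma internalSupport_singleton {V : Type*} {G : SimpleGraph V} {u v : V} (h : G.Adj u v) :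
    (Walk.cons h .nil).internalSupport = [] := rfl

lemma support_singleton {V : Type*} {G : SimpleGraph V} {u v : V} (h : G.Adj u v) :
    (Walk.cons h .nil).support = [u, v] := rfl

lemma inj5 {α : Type*} {a0 a1 a2 a3 a4 : α} (h01 : a0 ≠ a1) (h02 : a0 ≠ a2) (h03 : a0 ≠ a3)
    (h04 : a0 ≠ a4) (h12 : a1 ≠ a2) (h13 : a1 ≠ a3) (h14 : a1 ≠ a4) (h23 : a2 ≠ a3)
    (h24 : a2 ≠ a4) (h34 : a3 ≠ a4) : Function.Injective ![a0, a1, a2, a3, a4] := by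
  intro i j hij
  fin_cases i <;> fin_cases j <;> simp_all

open SimpleGraph.Walk in
lemma banner_of_cycle_pendant {V : Type*} {G : SimpleGraph V} {u w : V} (c : G.Walk u u)
    (hc : c.IsCycle) (hlen : 4 ≤ c.length) (hadj : G.Adj u w) (hw : w ∉ c.support) :
    bannerGraph.IsTopMinor G := by
  cases c with
  | nil => simp at hlen
  | cons h1 c1 =>
  cases c1 with
  | nil => simp at hlen
  | cons h2 c2 =>
  cases c2 with
  | nil => simp at hlen
  | cons h3 d =>
  rename_i b1 b2 b3
  have hnd : (b1 :: b2 :: d.support).Nodup := by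
    have := ((Walk.isCycle_def _).mp hc).2.2
    simpa [Walk.support_cons] using this
  have hb1 : b1 ∉ d.support := by
    have := (List.nodup_cons.mp hnd).1
    simp at this
    exact this.2
  have hb1b2 : b1 ≠ b2 := by
    have := (List.nodup_cons.mp hnd).1
    simp at this
    exact this.1
  have hb2 : b2 ∉ d.support := (List.nodup_cons.mp (List.nodup_cons.mp hnd).2).1
  have hdpath : d.IsPath := Walk.IsPath.mk' (List.nodup_cons.mp (List.nodup_cons.mp hnd).2).2
  have hdlen : 1 ≤ d.length := by
    simp only [Walk.length_cons] at hlen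
    omega
  have hdnil : ¬d.Nil := by
    rw [Walk.nil_iff_length_eq]
    omega
  have hb3u : b3 ≠ u := by
    intro he
    subst he
    rw [Walk.isPath_iff_eq_nil] at hdpath
    subst hdpath
    simp at hdlen
  have hub1 : u ≠ b1 := h1.ne
  have hub2 : u ≠ b2 := fun he => hb2 (he ▸ d.end_mem_support)
  have hwu : w ≠ u := by
    intro he
    exact hw (by simp [Walk.support_cons, he])
  have hwb1 : w ≠ b1 := fun he => hw (by simp [Walk.support_cons, he])
  have hwb2 : w ≠ b2 := fun he => hw (by simp [Walk.support_cons, he])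
  have hwd : w ∉ d.support := fun he => hw (by simp [Walk.support_cons, he])
  have hwb3 : w ≠ b3 := fun he => hwd (he ▸ d.start_mem_support)
  have Iu : u ∉ d.internalSupport := d.end_not_mem_internalSupport hdpath
  have Ib3 : b3 ∉ d.internalSupport := d.start_not_mem_internalSupport hdpath
  have Ib1 : b1 ∉ d.internalSupport := fun h => hb1 (d.internalSupport_subset_support _ h)
  have Ib2 : b2 ∉ d.internalSupport := fun h => hb2 (d.internalSupport_subset_support _ h)
  have Iw : w ∉ d.internalSupport := fun h => hwd (d.internalSupport_subset_support _ h)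
  refine banner_model (Walk.cons h1 .nil) (Walk.cons h2 .nil) (Walk.cons h3 .nil) d
    (Walk.cons hadj .nil) (isPath_singleton h1) (isPath_singleton h2) (isPath_singleton h3)
    hdpath (isPath_singleton hadj)
    (inj5 hub1 hub2 (Ne.symm hb3u) (Ne.symm hwu) hb1b2
      (fun he => hb1 (he ▸ d.start_mem_support)) (Ne.symm hwb1) h3.ne (Ne.symm hwb2)
      (fun he => hwb3 he.symm))
    ?_ ?_ ?_ ?_ ?_ ?_ ?_ ?_ ?_ ?_ ?_ ?_ ?_ ?_ ?_ ?_ ?_ ?_ ?_ ?_ <;>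
    simp only [internalSupport_singleton, support_singleton, List.not_mem_nil,
      List.mem_cons, List.not_mem_nil, or_false, List.mem_singleton]
  any_goals exact fun z (hz : False) => hz.elim
  -- remaining: about d.internalSupport
  all_goals intro z hz
  · rintro (rfl | rfl)
    · exact Iu hz
    · exact Ib1 hz
  · rintro (rfl | rfl)
    · exact Ib1 hz
    · exact Ib2 hz
  · rintro (rfl | rfl)
    · exact Ib2 hz
    · exact Ib3 hz
  · rintro (rfl | rfl)
    · exact Iu hz
    · exact Iw hz

open SimpleGraph.Walk in
lemma exists_decorated_cycle {V : Type} [Fintype V] {G : SimpleGraph V}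
    (hconn : G.Connected) (hcard : 5 ≤ Fintype.card V) (hnc : ¬G.IsCycleGraph)
    {u0 : V} (c : G.Walk u0 u0) (hc : c.IsCycle) (hl : 4 ≤ c.length) :
    ∃ (u : V) (c' : G.Walk u u) (w : V),
      c'.IsCycle ∧ 4 ≤ c'.length ∧ G.Adj u w ∧ w ∉ c'.support := by
  classical
  have hcnil : ¬c.Nil := by rw [Walk.nil_iff_length_eq]; omega
  by_cases hall : ∀ x, x ∈ c.support
  · -- spanning case: use a chord
    have hv : ∃ v, Nat.card (G.neighborSet v) ≠ 2 := by
      by_contra hno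
      push_neg at hno
      exact hnc ⟨hconn, hno⟩
    obtain ⟨v, hv⟩ := hv
    set c' := c.rotate v (hall v) with hc'def
    have hc' : c'.IsCycle := hc.rotate _
    have hnd' : c'.support.tail.Nodup := ((Walk.isCycle_def _).mp hc').2.2
    have hc'nil : ¬c'.Nil := by
      rw [Walk.nil_iff_length_eq, length_rotate]
      omega
    have hall' : ∀ x, x ∈ c'.support := fun x => (mem_support_rotate _ hcnil).mpr (hall x)
    set n := c'.length with hndef
    have hn4 : 4 ≤ n := by rw [hndef, hc'def, length_rotate]; omega
    have htail_len : c'.support.tail.length = n := by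
      rw [List.length_tail, c'.length_support]; omega
    have hn5 : 5 ≤ n := by
      have hsub : (Finset.univ : Finset V) ⊆ c'.support.tail.toFinset := fun x _ =>
        List.mem_toFinset.mpr ((mem_support_iff_mem_tail c' hc'nil).mp (hall' x))
      have h1 : Fintype.card V ≤ c'.support.tail.toFinset.card := by
        classical
        exact Finset.card_le_card hsub
      have h2 : c'.support.tail.toFinset.card ≤ c'.support.tail.length :=
        c'.support.tail.toFinset_card_le
      omega
    set a := c'.getVert 1 with hadef
    set b := c'.getVert (n - 1) with hbdef
    have hadj_a : G.Adj v a := by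
      have h := c'.adj_getVert_succ (i := 0) (by omega)
      rwa [Walk.getVert_zero] at h
    have hadj_b : G.Adj b v := by
      have h := c'.adj_getVert_succ (i := n - 1) (by omega)
      have he : n - 1 + 1 = n := by omega
      rwa [he, Walk.getVert_length] at h
    have hab : a ≠ b := by
      intro he
      have := c'.getVert_tail_inj hnd' (i := 1) (j := n - 1) (by omega) (by omega)
        (by omega) (by omega) he
      omega
    have hthird : ∃ w, G.Adj v w ∧ w ≠ a ∧ w ≠ b := by
      by_contra hno
      push_neg at hno
      have hset : G.neighborSet v = {a, b} := by
        ext x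
        simp only [SimpleGraph.mem_neighborSet, Set.mem_insert_iff, Set.mem_singleton_iff]
        constructor
        · intro hx
          by_cases h1 : x = a
          · exact Or.inl h1
          · exact Or.inr (hno x hx h1)
        · rintro (rfl | rfl)
          · exact hadj_a
          · exact hadj_b.symm
      rw [hset] at hv
      rw [Nat.card_coe_set_eq, Set.ncard_pair hab] at hv
      exact hv rfl
    obtain ⟨w, hw, hwa, hwb⟩ := hthird
    have hwmem : w ∈ c'.support := hall' w
    -- split at w
    set t := c'.takeUntil w hwmem with htdef
    set d := c'.dropUntil w hwmem with hddef
    have hspec : t.append d = c' := c'.take_spec hwmem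
    have hsum : t.length + d.length = n := by
      have := congrArg Walk.length hspec
      rwa [Walk.length_append] at this
    have hgetV : ∀ i : ℕ, c'.getVert i =
        if i < t.length then t.getVert i else d.getVert (i - t.length) := by
      intro i
      conv_lhs => rw [← hspec]
      exact Walk.getVert_append t d i
    have ht1 : 1 ≤ t.length := by
      rcases Nat.eq_zero_or_pos t.length with h0 | h1
      · exact absurd (Walk.eq_of_length_eq_zero h0) hw.ne
      · exact h1
    have hd1 : 1 ≤ d.length := by
      rcases Nat.eq_zero_or_pos d.length with h0 | h1
      · exact absurd (Walk.eq_of_length_eq_zero h0) hw.ne'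
      · exact h1
    have ht2 : 2 ≤ t.length := by
      by_contra hlt
      have ht1' : t.length = 1 := by omega
      have := hgetV 1
      rw [ht1', if_neg (by omega)] at this
      simp only [ht1', Nat.sub_self, Walk.getVert_zero] at this
      exact hwa (by rw [hadef, this])
    have hd2 : 2 ≤ d.length := by
      by_contra hlt
      have hd1' : d.length = 1 := by omega
      have htl : t.length = n - 1 := by omega
      have := hgetV (n - 1)
      rw [if_neg (by omega)] at this
      rw [htl, Nat.sub_self, Walk.getVert_zero] at this
      exact hwb (by rw [hbdef, this])
    -- support splitting
    have hsupp : c'.support.tail = t.support.tail ++ d.support.tail := by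
      have h1 : c'.support = t.support ++ d.support.tail := by
        conv_lhs => rw [← hspec]
        exact Walk.support_append t d
      rw [t.support_eq_cons] at h1
      rw [h1]
      rfl
    have hnd2 := hsupp ▸ hnd'
    rw [List.nodup_append] at hnd2
    obtain ⟨hnt, hndd, hdisj⟩ := hnd2
    have htpath : t.IsPath := by
      apply Walk.IsPath.mk'
      rw [t.support_eq_cons]
      refine List.nodup_cons.mpr ⟨?_, hnt⟩
      intro hvt
      exact hdisj _ hvt _ (Walk.end_mem_tail_support_of_ne hw.ne' d) rfl
    have hdpath : d.IsPath := by
      apply Walk.IsPath.mk'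
      rw [d.support_eq_cons]
      refine List.nodup_cons.mpr ⟨?_, hndd⟩
      intro hwd
      exact hdisj _ (Walk.end_mem_tail_support_of_ne hw.ne t) _ hwd rfl
    -- chord edge not on cycle
    have hedge : s(v, w) ∉ c'.edges := by
      intro he
      obtain ⟨i, hi, hs⟩ := c'.exists_getVert_of_mem_edges he
      rw [Sym2.eq_iff] at hs
      rcases hs with ⟨hiv, hiw⟩ | ⟨hiw, hiv⟩
      · rcases cycle_getVert_eq_start hnd' (le_of_lt hi) hiv with h0 | hn
        · rw [h0] at hiw
          exact hwa (by rw [hadef, hiw])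
        · omega
      · rcases cycle_getVert_eq_start hnd' (by omega) hiv with h0 | hn
        · omega
        · have : i = n - 1 := by omega
          rw [this] at hiw
          exact hwb (by rw [hbdef, hiw])
    have hamem : a ∈ t.support.tail := by
      have h1 := hgetV 1
      rw [if_pos (by omega)] at h1
      rw [hadef, h1]
      exact t.getVert_mem_support_tail (by omega) (by omega)
    have hbmem : b ∈ d.support.tail := by
      have h1 := hgetV (n - 1)
      rw [if_neg (by omega)] at h1
      rw [hbdef, h1]
      exact d.getVert_mem_support_tail (by omega) (by omega)
    rcases le_or_gt 3 d.length with hd3 | hd3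
    · -- use cycle cons hw d, pendant a
      refine ⟨v, Walk.cons hw d, a, ?_, ?_, hadj_a, ?_⟩
      · rw [Walk.cons_isCycle_iff]
        exact ⟨hdpath, fun hmem => hedge (c'.edges_dropUntil_subset hwmem hmem)⟩
      · rw [Walk.length_cons]; omega
      · rw [Walk.support_cons]
        intro hmem
        rcases List.mem_cons.mp hmem with h0 | h0
        · exact hadj_a.ne' h0
        · rw [d.support_eq_cons] at h0
          rcases List.mem_cons.mp h0 with h1 | h1
          · exact hwa h1.symm
          · exact hdisj _ hamem _ h1 rfl
    · -- use cycle cons hw t.reverse, pendant b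
      have ht3 : 3 ≤ t.length := by omega
      refine ⟨v, Walk.cons hw t.reverse, b, ?_, ?_, hadj_b.symm, ?_⟩
      · rw [Walk.cons_isCycle_iff]
        refine ⟨htpath.reverse, ?_⟩
        rw [Walk.edges_reverse, List.mem_reverse]
        exact fun hmem => hedge (c'.edges_takeUntil_subset hwmem hmem)
      · rw [Walk.length_cons, Walk.length_reverse]; omega
      · rw [Walk.support_cons]
        intro hmem
        rcases List.mem_cons.mp hmem with h0 | h0
        · exact hadj_b.ne h0
        · rw [Walk.support_reverse, List.mem_reverse, t.support_eq_cons] at h0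
          rcases List.mem_cons.mp h0 with h1 | h1
          · exact hadj_b.ne h1
          · exact hdisj _ h1 _ hbmem rfl
  · -- non-spanning: pendant outside the cycle
    push_neg at hall
    obtain ⟨y, hy⟩ := hall
    obtain ⟨p⟩ := hconn.preconnected u0 y
    obtain ⟨dart, _, hfst, hsnd⟩ := p.exists_boundary_dart {x | x ∈ c.support}
      c.start_mem_support hy
    refine ⟨dart.fst, c.rotate _ hfst, dart.snd, hc.rotate _, ?_, dart.adj, ?_⟩
    · rw [length_rotate]; omega
    · rw [mem_support_rotate _ hcnil]
      exact hsnd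

lemma c4_topMinor_of_banner {V : Type*} {G : SimpleGraph V} (h : bannerGraph.IsTopMinor G) :
    (SimpleGraph.cycleGraph 4).IsTopMinor G := by
  obtain ⟨φ, σ, hinj, hpath, hsymm, hdisj⟩ := h
  have hmap : ∀ (x y : Fin 4), (SimpleGraph.cycleGraph 4).Adj x y →
      bannerGraph.Adj x.castSucc y.castSucc := by decide
  refine ⟨fun x => φ x.castSucc, fun x y h => σ (hmap x y h), ?_, ?_, ?_, ?_⟩
  · intro x y hxy
    exact Fin.castSucc_injective _ (hinj hxy)
  · intro x y h
    exact hpath _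
  · intro x y h
    exact hsymm (hmap x y h)
  · intro x y x' y' h h' hne
    refine hdisj (hmap x y h) (hmap x' y' h') ?_
    intro hge
    apply hne
    rw [Sym2.eq_iff] at hge ⊢
    rcases hge with ⟨h1, h2⟩ | ⟨h1, h2⟩
    · exact Or.inl ⟨Fin.castSucc_injective _ h1, Fin.castSucc_injective _ h2⟩
    · exact Or.inr ⟨Fin.castSucc_injective _ h1, Fin.castSucc_injective _ h2⟩

open SimpleGraph.Walk in
lemma not_banner_of_two_regular {V : Type} [Fintype V] {G : SimpleGraph V}
    (hcyc : ∀ v, Nat.card (G.neighborSet v) = 2) : ¬bannerGraph.IsTopMinor G := by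
  rintro ⟨φ, σ, hinj, hpath, hsymm, hdisj⟩
  have h1 : bannerGraph.Adj 0 1 := by decide
  have h3 : bannerGraph.Adj 0 3 := by decide
  have h4 : bannerGraph.Adj 0 4 := by decide
  have key : ∀ {a b : Fin 5} (ha : bannerGraph.Adj 0 a) (hb : bannerGraph.Adj 0 b), a ≠ b →
      (σ ha).getVert 1 ≠ (σ hb).getVert 1 := by
    intro a b ha hb hab heq
    have hna : ¬(σ ha).Nil := not_nil_of_ne (hinj.ne ha.ne)
    have hnb : ¬(σ hb).Nil := not_nil_of_ne (hinj.ne hb.ne)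
    set z := (σ ha).getVert 1 with hz
    have hza : G.Adj (φ 0) z := Walk.adj_snd hna
    have hmem1 : z ∈ (σ ha).support :=
      Walk.mem_support_iff_exists_getVert.mpr ⟨1, rfl, not_nil_iff_lt_length.mp hna⟩
    have hmem2 : z ∈ (σ hb).support :=
      Walk.mem_support_iff_exists_getVert.mpr ⟨1, heq.symm, not_nil_iff_lt_length.mp hnb⟩
    have hedge_ne : s((0 : Fin 5), a) ≠ s((0 : Fin 5), b) := by
      intro hs
      rcases Sym2.eq_iff.mp hs with ⟨_, hab'⟩ | ⟨h0b, _⟩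
      · exact hab hab'
      · exact hb.ne h0b
    rcases (σ ha).mem_support_cases hmem1 with hz0 | hza' | hzi
    · exact hza.ne hz0.symm
    · have : z ∈ (σ hb).internalSupport := by
        rw [mem_internalSupport_iff (hpath hb)]
        exact ⟨hmem2, fun h => hza.ne h.symm, fun h => hinj.ne hab (hza' ▸ h)⟩
      exact hdisj hb ha (Ne.symm hedge_ne) z this hmem1
    · exact hdisj ha hb hedge_ne z hzi hmem2
  set z1 := (σ h1).getVert 1
  set z3 := (σ h3).getVert 1
  set z4 := (σ h4).getVert 1
  have hne13 : z1 ≠ z3 := key h1 h3 (by decide)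
  have hne14 : z1 ≠ z4 := key h1 h4 (by decide)
  have hne34 : z3 ≠ z4 := key h3 h4 (by decide)
  have hadj1 : G.Adj (φ 0) z1 := Walk.adj_snd (not_nil_of_ne (hinj.ne h1.ne))
  have hadj3 : G.Adj (φ 0) z3 := Walk.adj_snd (not_nil_of_ne (hinj.ne h3.ne))
  have hadj4 : G.Adj (φ 0) z4 := Walk.adj_snd (not_nil_of_ne (hinj.ne h4.ne))
  have hsub : ({z1, z3, z4} : Set V) ⊆ G.neighborSet (φ 0) := by
    rintro x (rfl | rfl | rfl)
    · exact hadj1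
    · exact hadj3
    · exact hadj4
  have h3card : ({z1, z3, z4} : Set V).ncard = 3 :=
    Set.ncard_eq_three.mpr ⟨z1, z3, z4, hne13, hne14, hne34, rfl⟩
  have hle : ({z1, z3, z4} : Set V).ncard ≤ (G.neighborSet (φ 0)).ncard :=
    Set.ncard_le_ncard hsub (Set.toFinite _)
  have := hcyc (φ 0)
  rw [Nat.card_coe_set_eq] at this
  omega


/-- A connected finite simple graph on at least five vertices has no banner topological
minor iff it is a cycle or has no `C₄` topological minor. -/
theorem statement_17 {V : Type} [Fintype V] (G : SimpleGraph V)
    (hconn : G.Connected) (hcard : 5 ≤ Fintype.card V) :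
    ¬ bannerGraph.IsTopMinor G ↔
      G.IsCycleGraph ∨ ¬ (SimpleGraph.cycleGraph 4).IsTopMinor G := by
  classical
  constructor
  · intro hb
    by_cases hcyc : G.IsCycleGraph
    · exact Or.inl hcyc
    · right
      intro hc4
      obtain ⟨u, c, hc, hl⟩ := exists_cycle_of_c4_topMinor hc4
      obtain ⟨v, c', w, hc', hl', hadj, hw⟩ := exists_decorated_cycle hconn hcard hcyc c hc hl
      exact hb (banner_of_cycle_pendant c' hc' hl' hadj hw)
  · rintro (hcyc | hc4)
    · exact not_banner_of_two_regular hcyc.2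
    · intro hb
      exact hc4 (c4_topMinor_of_banner hb)
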